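/- Let 𝒥 be a Lévy kernel with ∫_{ℝᴺ}(|y|² + 2|y|·|x|)𝒥(y)dy controlled as follows: ∫|y|²𝒥(y)dy < ∞ and 𝒥 radially symmetric. Then for φ_λ(x) = e^{−λ|x|²}, λ > 0, the operator ℒφ_λ satisfies ℒφ_λ(x) ≤ C λ e^{−λ|x|²} for all x ∈ ℝᴺ, with C independent of λ ∈ (0,1]. -/

import Mathlib

open MeasureTheory Set Filter

theorem stmt11 (N : ℕ) (hN : 1 ≤ N)
    (J : EuclideanSpace ℝ (Fin N) → ℝ)
    (hJ0 : ∀ z, 0 ≤ J z)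
    (hJrad : ∀ z w, ‖z‖ = ‖w‖ → J z = J w)
    (hmom : Integrable (fun y => ‖y‖ ^ 2 * J y)) :
    ∃ C > (0:ℝ), ∀ lam : ℝ, 0 < lam → lam ≤ 1 →
      ∀ Lw : EuclideanSpace ℝ (Fin N) → ℝ,
        (∀ x, Tendsto (fun ε : ℝ =>
            ∫ z in {z | ε < ‖x - z‖},
              (Real.exp (-lam * ‖x‖ ^ 2) - Real.exp (-lam * ‖z‖ ^ 2)) * J (x - z))
          (nhdsWithin 0 (Ioi 0)) (nhds (Lw x))) →
        ∀ x, Lw x ≤ C * lam * Real.exp (-lam * ‖x‖ ^ 2) := by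
  have hInt0 : 0 ≤ ∫ y, ‖y‖ ^ 2 * J y :=
    integral_nonneg fun y => mul_nonneg (by positivity) (hJ0 y)
  refine ⟨(∫ y, ‖y‖ ^ 2 * J y) + 1, by linarith, ?_⟩
  intro lam hlam hlam1 Lw hLw x
  set φx := Real.exp (-lam * ‖x‖ ^ 2) with hφx
  have hφxpos : 0 < φx := Real.exp_pos _
  have hφxle : φx ≤ 1 := by
    rw [hφx]
    exact Real.exp_le_one_iff.2 (by nlinarith [sq_nonneg ‖x‖])
  refine le_of_tendsto (hLw x) ?_
  filter_upwards [self_mem_nhdsWithin] with ε hε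
  simp only [mem_Ioi] at hε
  set T : Set (EuclideanSpace ℝ (Fin N)) := {y | ε < ‖y‖} with hT
  have hTmeas : MeasurableSet T := measurableSet_lt measurable_const measurable_norm
  -- substitution y = x - z
  have hemb : MeasurableEmbedding (fun z : EuclideanSpace ℝ (Fin N) => x - z) :=
    (Homeomorph.subLeft x).toMeasurableEquiv.measurableEmbedding
  have hpre2 : (fun y : EuclideanSpace ℝ (Fin N) => x - y) ⁻¹' {z | ε < ‖x - z‖} = T := by
    ext y; simp [hT, sub_sub_cancel]
  have hsub : (∫ z in {z | ε < ‖x - z‖},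
        (Real.exp (-lam * ‖x‖ ^ 2) - Real.exp (-lam * ‖z‖ ^ 2)) * J (x - z))
      = ∫ y in T, (φx - Real.exp (-lam * ‖x - y‖ ^ 2)) * J y := by
    rw [← (Measure.measurePreserving_sub_left volume x).setIntegral_preimage_emb hemb
      (fun z => (Real.exp (-lam * ‖x‖ ^ 2) - Real.exp (-lam * ‖z‖ ^ 2)) * J (x - z))
      {z | ε < ‖x - z‖}]
    simp only [hpre2, sub_sub_cancel, ← hφx]
  -- measurability of J on T
  have hJm : AEStronglyMeasurable J (volume.restrict T) := by
    have h1 : AEStronglyMeasurable (fun y => (‖y‖ ^ 2 * J y) * (‖y‖ ^ 2)⁻¹)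
        (volume.restrict T) :=
      (hmom.aestronglyMeasurable.restrict).mul
        ((measurable_norm.pow_const 2).inv.aestronglyMeasurable)
    refine h1.congr ?_
    refine (ae_restrict_iff' hTmeas).2 (ae_of_all _ fun y hy => ?_)
    have hy' : (0:ℝ) < ‖y‖ := lt_trans hε hy
    field_simp
  have hmomT : IntegrableOn (fun y => ‖y‖ ^ 2 * J y) T volume := hmom.integrableOn
  have hJint : IntegrableOn J T volume := by
    refine Integrable.mono' (hmomT.const_mul (ε ^ 2)⁻¹) hJm ?_
    refine (ae_restrict_iff' hTmeas).2 (ae_of_all _ fun y hy => ?_)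
    have h1 : ε ≤ ‖y‖ := le_of_lt hy
    rw [Real.norm_of_nonneg (hJ0 y), inv_mul_eq_div, le_div_iff₀ (by positivity)]
    nlinarith [hJ0 y, norm_nonneg y, mul_le_mul h1 h1 hε.le (norm_nonneg y),
      mul_le_mul_of_nonneg_left (mul_le_mul h1 h1 hε.le (norm_nonneg y)) (hJ0 y)]
  have hinner : IntegrableOn (fun y => (inner ℝ x y : ℝ) * J y) T volume := by
    refine Integrable.mono' (hmomT.const_mul (‖x‖ * ε⁻¹)) ?_ ?_
    · exact ((continuous_const.inner continuous_id).aestronglyMeasurable.restrict).mul hJm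
    · refine (ae_restrict_iff' hTmeas).2 (ae_of_all _ fun y hy => ?_)
      have h1 : ε ≤ ‖y‖ := le_of_lt hy
      have h2 : ‖x‖ * ε⁻¹ * (‖y‖ ^ 2 * J y) = ‖x‖ * ‖y‖ ^ 2 * J y / ε := by
        field_simp
      rw [norm_mul, Real.norm_of_nonneg (hJ0 y), h2, le_div_iff₀ hε, Real.norm_eq_abs]
      have h3 : |(inner ℝ x y : ℝ)| ≤ ‖x‖ * ‖y‖ := abs_real_inner_le_norm x y
      nlinarith [hJ0 y, norm_nonneg x, norm_nonneg y, abs_nonneg (inner ℝ x y : ℝ),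
        mul_le_mul_of_nonneg_right h3 (mul_nonneg (hJ0 y) hε.le),
        mul_le_mul_of_nonneg_left h1
          (mul_nonneg (mul_nonneg (norm_nonneg x) (norm_nonneg y)) (hJ0 y))]
  -- integrability of the two sides
  have hf_int : IntegrableOn (fun y => (φx - Real.exp (-lam * ‖x - y‖ ^ 2)) * J y) T volume := by
    refine Integrable.mono' hJint ?_ ?_
    · have hc : Continuous (fun y : EuclideanSpace ℝ (Fin N) =>
          φx - Real.exp (-lam * ‖x - y‖ ^ 2)) := by fun_prop
      exact (hc.aestronglyMeasurable.restrict).mul hJm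
    · refine (ae_restrict_iff' hTmeas).2 (ae_of_all _ fun y _ => ?_)
      rw [norm_mul, Real.norm_of_nonneg (hJ0 y), Real.norm_eq_abs]
      have h1 : (0:ℝ) < Real.exp (-lam * ‖x - y‖ ^ 2) := Real.exp_pos _
      have h2 : Real.exp (-lam * ‖x - y‖ ^ 2) ≤ 1 :=
        Real.exp_le_one_iff.2 (by nlinarith [sq_nonneg ‖x - y‖])
      have h3 : |φx - Real.exp (-lam * ‖x - y‖ ^ 2)| ≤ 1 :=
        abs_le.2 ⟨by linarith, by linarith⟩
      nlinarith [hJ0 y, abs_nonneg (φx - Real.exp (-lam * ‖x - y‖ ^ 2)),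
        mul_le_mul_of_nonneg_right h3 (hJ0 y)]
  have hg_int : IntegrableOn
      (fun y => lam * φx * ((‖y‖ ^ 2 - 2 * (inner ℝ x y : ℝ)) * J y)) T volume := by
    have heq : (fun y : EuclideanSpace ℝ (Fin N) =>
        lam * φx * ((‖y‖ ^ 2 - 2 * (inner ℝ x y : ℝ)) * J y))
        = fun y => lam * φx * (‖y‖ ^ 2 * J y - 2 * ((inner ℝ x y : ℝ) * J y)) := by
      funext y; ring
    rw [heq]
    exact (hmomT.sub (hinner.const_mul 2)).const_mul (lam * φx)
  -- pointwise bound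
  have hpt : ∀ y ∈ T, (φx - Real.exp (-lam * ‖x - y‖ ^ 2)) * J y
      ≤ lam * φx * ((‖y‖ ^ 2 - 2 * (inner ℝ x y : ℝ)) * J y) := by
    intro y _
    have hkey : φx - Real.exp (-lam * ‖x - y‖ ^ 2)
        ≤ lam * φx * (‖x - y‖ ^ 2 - ‖x‖ ^ 2) := by
      have h1 : Real.exp (-lam * ‖x - y‖ ^ 2)
          = φx * Real.exp (-(lam * (‖x - y‖ ^ 2 - ‖x‖ ^ 2))) := by
        rw [hφx, ← Real.exp_add]; ring_nf
      rw [h1]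
      have h2 : 1 - Real.exp (-(lam * (‖x - y‖ ^ 2 - ‖x‖ ^ 2)))
          ≤ lam * (‖x - y‖ ^ 2 - ‖x‖ ^ 2) := by
        nlinarith [Real.add_one_le_exp (-(lam * (‖x - y‖ ^ 2 - ‖x‖ ^ 2)))]
      nlinarith [hφxpos]
    have h4 : ‖x - y‖ ^ 2 - ‖x‖ ^ 2 = ‖y‖ ^ 2 - 2 * (inner ℝ x y : ℝ) := by
      rw [norm_sub_sq_real]; ring
    calc (φx - Real.exp (-lam * ‖x - y‖ ^ 2)) * J y
        ≤ lam * φx * (‖x - y‖ ^ 2 - ‖x‖ ^ 2) * J y :=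
          mul_le_mul_of_nonneg_right hkey (hJ0 y)
      _ = lam * φx * ((‖y‖ ^ 2 - 2 * (inner ℝ x y : ℝ)) * J y) := by rw [h4]; ring
  -- odd part vanishes
  have hodd : (∫ y in T, (inner ℝ x y : ℝ) * J y) = 0 := by
    have hembn : MeasurableEmbedding (fun y : EuclideanSpace ℝ (Fin N) => -y) :=
      (Homeomorph.neg (EuclideanSpace ℝ (Fin N))).toMeasurableEquiv.measurableEmbedding
    have hpren : (fun y : EuclideanSpace ℝ (Fin N) => -y) ⁻¹' T = T := by
      ext y; simp [hT]
    have h1 := (Measure.measurePreserving_neg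
      (volume : Measure (EuclideanSpace ℝ (Fin N)))).setIntegral_preimage_emb hembn
      (fun y => (inner ℝ x y : ℝ) * J y) T
    rw [hpren] at h1
    have h2 : (∫ y in T, -((inner ℝ x y : ℝ) * J y)) = ∫ y in T, (inner ℝ x y : ℝ) * J y := by
      rw [← h1]
      refine setIntegral_congr_fun hTmeas fun y _ => ?_
      simp only [inner_neg_right, hJrad (-y) y (norm_neg y)]
      ring
    rw [integral_neg] at h2
    linarith
  have hset_le : (∫ y in T, ‖y‖ ^ 2 * J y) ≤ ∫ y, ‖y‖ ^ 2 * J y :=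
    setIntegral_le_integral hmom
      (ae_of_all _ fun y => mul_nonneg (by positivity) (hJ0 y))
  calc (∫ z in {z | ε < ‖x - z‖},
        (Real.exp (-lam * ‖x‖ ^ 2) - Real.exp (-lam * ‖z‖ ^ 2)) * J (x - z))
      = ∫ y in T, (φx - Real.exp (-lam * ‖x - y‖ ^ 2)) * J y := hsub
    _ ≤ ∫ y in T, lam * φx * ((‖y‖ ^ 2 - 2 * (inner ℝ x y : ℝ)) * J y) :=
        setIntegral_mono_on hf_int hg_int hTmeas hpt
    _ = lam * φx * ((∫ y in T, ‖y‖ ^ 2 * J y) - 2 * ∫ y in T, (inner ℝ x y : ℝ) * J y) := by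
        have heq : (fun y : EuclideanSpace ℝ (Fin N) =>
            lam * φx * ((‖y‖ ^ 2 - 2 * (inner ℝ x y : ℝ)) * J y))
            = fun y => lam * φx * (‖y‖ ^ 2 * J y - 2 * ((inner ℝ x y : ℝ) * J y)) := by
          funext y; ring
        rw [heq, integral_const_mul, integral_sub hmomT (hinner.const_mul 2),
          integral_const_mul]
    _ = lam * φx * ∫ y in T, ‖y‖ ^ 2 * J y := by rw [hodd]; ring
    _ ≤ lam * φx * ∫ y, ‖y‖ ^ 2 * J y := by
        exact mul_le_mul_of_nonneg_left hset_le (by positivity)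
    _ ≤ ((∫ y, ‖y‖ ^ 2 * J y) + 1) * lam * φx := by nlinarith [hφxpos, hlam]
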